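/- The Casimir element J₁ acts as zero in the representation ρ₁₀: as an operator identity on D, 2·ρ(H₃)² + ρ(H₊)ρ(H₋) + ρ(H₋)ρ(H₊) − 2·ρ(F₃)² − ρ(F₊)ρ(F₋) − ρ(F₋)ρ(F₊) = 0. -/

import Mathlib

noncomputable section

/-- The index set `S = {(ℓ,m) : 1 ≤ ℓ, |m| ≤ ℓ}` of the orthonormal basis of `D`. -/
abbrev inS (p : ℤ × ℤ) : Prop := 1 ≤ p.1 ∧ |p.2| ≤ p.1

/-- The ambient space of finitely supported families; the representation space `D`
is the subspace of families supported in `S`. -/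
abbrev V := (ℤ × ℤ) →₀ ℂ

/-- The basis vector `ξ_{ℓ,m}`, with the convention `ξ_{ℓ,m} = 0` for `(ℓ,m) ∉ S`. -/
def ξ (ℓ m : ℤ) : V := if inS (ℓ, m) then Finsupp.single (ℓ, m) 1 else 0

/-- `C ℓ = i √(ℓ²-1) / √(4ℓ²-1)`. -/
def C (ℓ : ℤ) : ℂ := Complex.I * (Real.sqrt ((ℓ : ℝ) ^ 2 - 1) / Real.sqrt (4 * (ℓ : ℝ) ^ 2 - 1))

/-- Real square root of an integer, viewed as a complex number. -/
def csqrt (a : ℤ) : ℂ := ((Real.sqrt (a : ℝ) : ℝ) : ℂ)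

/-- Build a linear operator on `V` from its values on the basis vectors `ξ_{ℓ,m}`,
`(ℓ,m) ∈ S` (and `0` on basis vectors outside `S`). -/
def mkOp (f : ℤ → ℤ → V) : V →ₗ[ℂ] V :=
  Finsupp.lsum ℂ fun p => LinearMap.toSpanSingleton ℂ V (if inS p then f p.1 p.2 else 0)

/-- `ρ(H₃) ξ_{ℓ,m} = m ξ_{ℓ,m}`. -/
def rhoH3 : V →ₗ[ℂ] V := mkOp fun ℓ m => (m : ℂ) • ξ ℓ m

/-- `ρ(H₊) ξ_{ℓ,m} = √((ℓ-m)(ℓ+m+1)) ξ_{ℓ,m+1}`. -/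
def rhoHp : V →ₗ[ℂ] V := mkOp fun ℓ m => csqrt ((ℓ - m) * (ℓ + m + 1)) • ξ ℓ (m + 1)

/-- `ρ(H₋) ξ_{ℓ,m} = √((ℓ+m)(ℓ-m+1)) ξ_{ℓ,m-1}`. -/
def rhoHm : V →ₗ[ℂ] V := mkOp fun ℓ m => csqrt ((ℓ + m) * (ℓ - m + 1)) • ξ ℓ (m - 1)

/-- `ρ(F₃) ξ_{ℓ,m} = C_ℓ √(ℓ²-m²) ξ_{ℓ-1,m} - C_{ℓ+1} √((ℓ+1)²-m²) ξ_{ℓ+1,m}`. -/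
def rhoF3 : V →ₗ[ℂ] V := mkOp fun ℓ m =>
  (C ℓ * csqrt (ℓ ^ 2 - m ^ 2)) • ξ (ℓ - 1) m
    - (C (ℓ + 1) * csqrt ((ℓ + 1) ^ 2 - m ^ 2)) • ξ (ℓ + 1) m

/-- `ρ(F₊) ξ_{ℓ,m} = C_ℓ √((ℓ-m)(ℓ-m-1)) ξ_{ℓ-1,m+1} + C_{ℓ+1} √((ℓ+m+1)(ℓ+m+2)) ξ_{ℓ+1,m+1}`. -/
def rhoFp : V →ₗ[ℂ] V := mkOp fun ℓ m =>
  (C ℓ * csqrt ((ℓ - m) * (ℓ - m - 1))) • ξ (ℓ - 1) (m + 1)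
    + (C (ℓ + 1) * csqrt ((ℓ + m + 1) * (ℓ + m + 2))) • ξ (ℓ + 1) (m + 1)

/-- `ρ(F₋) ξ_{ℓ,m} = -C_ℓ √((ℓ+m)(ℓ+m-1)) ξ_{ℓ-1,m-1} - C_{ℓ+1} √((ℓ-m+1)(ℓ-m+2)) ξ_{ℓ+1,m-1}`. -/
def rhoFm : V →ₗ[ℂ] V := mkOp fun ℓ m =>
  -((C ℓ * csqrt ((ℓ + m) * (ℓ + m - 1))) • ξ (ℓ - 1) (m - 1))
    - (C (ℓ + 1) * csqrt ((ℓ - m + 1) * (ℓ - m + 2))) • ξ (ℓ + 1) (m - 1)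

/-- The inner product on `D` making `(ξ_{ℓ,m})` orthonormal. -/
def inn (φ ψ : V) : ℂ := ∑' p : ℤ × ℤ, (starRingEnd ℂ) (φ p) * ψ p

lemma mkOp_single (f : ℤ → ℤ → V) (p : ℤ × ℤ) (b : ℂ) :
    mkOp f (Finsupp.single p b) = b • (if inS p then f p.1 p.2 else 0) := by
  simp [mkOp, Finsupp.lsum_single, LinearMap.toSpanSingleton_apply]

lemma mkOp_ξ (f : ℤ → ℤ → V) (ℓ m : ℤ) :
    mkOp f (ξ ℓ m) = if inS (ℓ, m) then f ℓ m else 0 := by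
  rw [ξ]; split_ifs with h
  · rw [mkOp_single, if_pos h, one_smul]
  · simp

lemma ξ_eq_zero {ℓ m : ℤ} (h : ¬ inS (ℓ, m)) : ξ ℓ m = 0 := if_neg h

lemma C_one : C 1 = 0 := by simp [C]

lemma csqrt_zero' {a : ℤ} (h : a = 0) : csqrt a = 0 := by simp [csqrt, h]

lemma csqrt_mul {a b : ℤ} (h : 0 ≤ a) : csqrt a * csqrt b = csqrt (a * b) := by
  rw [csqrt, csqrt, csqrt, ← Complex.ofReal_mul, ← Real.sqrt_mul (by exact_mod_cast h)]
  push_cast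
  ring_nf

lemma csqrt_sq {a : ℤ} (h : 0 ≤ a) : csqrt a ^ 2 = (a : ℂ) := by
  rw [csqrt, ← Complex.ofReal_pow, Real.sq_sqrt (by exact_mod_cast h)]
  push_cast; ring

lemma C_sq {ℓ : ℤ} (h : 1 ≤ ℓ) : (C ℓ)^2 = -(((ℓ:ℂ)^2 - 1)/(4*(ℓ:ℂ)^2 - 1)) := by
  have h1 : (1:ℝ) ≤ (ℓ:ℝ) := by exact_mod_cast h
  have hA : (0:ℝ) ≤ (ℓ:ℝ)^2 - 1 := by nlinarith
  have hB : (0:ℝ) < 4*(ℓ:ℝ)^2 - 1 := by nlinarith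
  rw [C, mul_pow, Complex.I_sq, div_pow, ← Complex.ofReal_pow, ← Complex.ofReal_pow,
    Real.sq_sqrt hA, Real.sq_sqrt hB.le]
  push_cast
  ring

lemma inS_iff (ℓ m : ℤ) : inS (ℓ, m) ↔ 1 ≤ ℓ ∧ -ℓ ≤ m ∧ m ≤ ℓ := by
  simp [inS, abs_le]

lemma rhoH3_ξ (ℓ m : ℤ) : rhoH3 (ξ ℓ m) = (m : ℂ) • ξ ℓ m := by
  rw [rhoH3, mkOp_ξ]; split_ifs with h
  · rfl
  · rw [ξ_eq_zero h, smul_zero]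

lemma rhoHp_ξ (ℓ m : ℤ) : rhoHp (ξ ℓ m) = csqrt ((ℓ - m) * (ℓ + m + 1)) • ξ ℓ (m + 1) := by
  rw [rhoHp, mkOp_ξ]; split_ifs with h
  · rfl
  · by_cases h2 : inS (ℓ, m + 1)
    · rw [inS_iff] at h h2
      rw [csqrt_zero' (by rw [mul_eq_zero]; omega : (ℓ - m) * (ℓ + m + 1) = 0), zero_smul]
    · rw [ξ_eq_zero h2, smul_zero]

lemma rhoHm_ξ (ℓ m : ℤ) : rhoHm (ξ ℓ m) = csqrt ((ℓ + m) * (ℓ - m + 1)) • ξ ℓ (m - 1) := by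
  rw [rhoHm, mkOp_ξ]; split_ifs with h
  · rfl
  · by_cases h2 : inS (ℓ, m - 1)
    · rw [inS_iff] at h h2
      rw [csqrt_zero' (by rw [mul_eq_zero]; omega : (ℓ + m) * (ℓ - m + 1) = 0), zero_smul]
    · rw [ξ_eq_zero h2, smul_zero]

lemma rhoF3_ξ (ℓ m : ℤ) : rhoF3 (ξ ℓ m) =
    (C ℓ * csqrt (ℓ ^ 2 - m ^ 2)) • ξ (ℓ - 1) m
      - (C (ℓ + 1) * csqrt ((ℓ + 1) ^ 2 - m ^ 2)) • ξ (ℓ + 1) m := by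
  rw [rhoF3, mkOp_ξ]; split_ifs with h
  · rfl
  · have t1 : ξ (ℓ - 1) m = 0 := by
      apply ξ_eq_zero; rw [inS_iff] at h ⊢; omega
    rw [t1, smul_zero, zero_sub]; symm; rw [neg_eq_zero]
    by_cases h2 : inS (ℓ + 1, m)
    · rw [inS_iff] at h h2
      by_cases hl : ℓ = 0
      · subst hl; norm_num [C_one]
      · have : (ℓ + 1)^2 - m^2 = 0 := by
          have : m = ℓ + 1 ∨ m = -(ℓ+1) := by omega
          rcases this with h' | h' <;> subst h' <;> ring
        rw [csqrt_zero' this, mul_zero, zero_smul]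
    · rw [ξ_eq_zero h2, smul_zero]

lemma rhoFp_ξ (ℓ m : ℤ) : rhoFp (ξ ℓ m) =
    (C ℓ * csqrt ((ℓ - m) * (ℓ - m - 1))) • ξ (ℓ - 1) (m + 1)
      + (C (ℓ + 1) * csqrt ((ℓ + m + 1) * (ℓ + m + 2))) • ξ (ℓ + 1) (m + 1) := by
  rw [rhoFp, mkOp_ξ]; split_ifs with h
  · rfl
  · have t1 : ξ (ℓ - 1) (m + 1) = 0 := by
      apply ξ_eq_zero; rw [inS_iff] at h ⊢; omega
    rw [t1, smul_zero, zero_add]; symm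
    by_cases h2 : inS (ℓ + 1, m + 1)
    · rw [inS_iff] at h h2
      by_cases hl : ℓ = 0
      · subst hl; norm_num [C_one]
      · have : (ℓ + m + 1) * (ℓ + m + 2) = 0 := by
          have : ℓ + m + 1 = 0 ∨ ℓ + m + 2 = 0 := by omega
          rcases this with h' | h' <;> rw [show (ℓ+m+1)*(ℓ+m+2) = 0 by rw [mul_eq_zero]; omega]
        rw [csqrt_zero' this, mul_zero, zero_smul]
    · rw [ξ_eq_zero h2, smul_zero]

lemma rhoFm_ξ (ℓ m : ℤ) : rhoFm (ξ ℓ m) =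
    -((C ℓ * csqrt ((ℓ + m) * (ℓ + m - 1))) • ξ (ℓ - 1) (m - 1))
      - (C (ℓ + 1) * csqrt ((ℓ - m + 1) * (ℓ - m + 2))) • ξ (ℓ + 1) (m - 1) := by
  rw [rhoFm, mkOp_ξ]; split_ifs with h
  · rfl
  · have t1 : ξ (ℓ - 1) (m - 1) = 0 := by
      apply ξ_eq_zero; rw [inS_iff] at h ⊢; omega
    rw [t1, smul_zero, neg_zero, zero_sub]; symm; rw [neg_eq_zero]
    by_cases h2 : inS (ℓ + 1, m - 1)
    · rw [inS_iff] at h h2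
      by_cases hl : ℓ = 0
      · subst hl; norm_num [C_one]
      · have : (ℓ - m + 1) * (ℓ - m + 2) = 0 := by
          rw [mul_eq_zero]; omega
        rw [csqrt_zero' this, mul_zero, zero_smul]
    · rw [ξ_eq_zero h2, smul_zero]

lemma cast_ne (a : ℤ) (h : a ≠ 0) : (a : ℂ) ≠ 0 := Int.cast_ne_zero.mpr h

lemma consec_nonneg (a : ℤ) : 0 ≤ a * (a - 1) := by
  rcases le_or_gt a 0 with h | h
  · have := mul_nonneg (by omega : (0:ℤ) ≤ -a) (by omega : (0:ℤ) ≤ 1 - a)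
    nlinarith
  · exact mul_nonneg (by omega) (by omega)

lemma C_sq' {ℓ : ℤ} (h : 1 ≤ ℓ) :
    (C ℓ)^2 * (4*(ℓ:ℂ)^2 - 1) = -((ℓ:ℂ)^2 - 1) := by
  have h1 : (1:ℝ) ≤ (ℓ:ℝ) := by exact_mod_cast h
  have hA : (0:ℝ) ≤ (ℓ:ℝ)^2 - 1 := by nlinarith
  have hB : (0:ℝ) < 4*(ℓ:ℝ)^2 - 1 := by nlinarith
  have hB' : (4*(ℓ:ℂ)^2 - 1) ≠ 0 := by
    have := cast_ne (4*ℓ^2-1) (by nlinarith)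
    push_cast at this; convert this using 1
  rw [C, mul_pow, Complex.I_sq, div_pow, ← Complex.ofReal_pow, ← Complex.ofReal_pow,
    Real.sq_sqrt hA, Real.sq_sqrt hB.le]
  push_cast
  field_simp [hB']
  rw [mul_div_cancel_right₀ _ (by rw [mul_comm]; exact hB')]

lemma hc_zero {ℓ m : ℤ} (h1 : 1 ≤ ℓ) (h2 : -ℓ ≤ m) (h3 : m ≤ ℓ) :
    2*(m:ℂ)^2
    + csqrt ((ℓ+m)*(ℓ-m+1))^2
    + csqrt ((ℓ-m)*(ℓ+m+1))^2
    + 2*(C ℓ)^2 * csqrt (ℓ^2-m^2)^2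
    + 2*(C (ℓ+1))^2 * csqrt ((ℓ+1)^2-m^2)^2
    + (C ℓ)^2 * csqrt ((ℓ+m)*(ℓ+m-1))^2
    + (C (ℓ+1))^2 * csqrt ((ℓ-m+1)*(ℓ-m+2))^2
    + (C ℓ)^2 * csqrt ((ℓ-m)*(ℓ-m-1))^2
    + (C (ℓ+1))^2 * csqrt ((ℓ+m+1)*(ℓ+m+2))^2 = 0 := by
  have e1 := C_sq' h1
  have e2 := C_sq' (show 1 ≤ ℓ + 1 by omega)
  push_cast at e2
  have d1 : (4*(ℓ:ℂ)^2 - 1) ≠ 0 := by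
    have := cast_ne (4*ℓ^2-1) (by nlinarith)
    push_cast at this; convert this using 1
  have d2 : (4*((ℓ:ℂ)+1)^2 - 1) ≠ 0 := by
    have := cast_ne (4*(ℓ+1)^2-1) (by nlinarith)
    push_cast at this; convert this using 1
  rw [csqrt_sq (by nlinarith : (0:ℤ) ≤ (ℓ+m)*(ℓ-m+1)),
      csqrt_sq (by nlinarith : (0:ℤ) ≤ (ℓ-m)*(ℓ+m+1)),
      csqrt_sq (by nlinarith : (0:ℤ) ≤ ℓ^2-m^2),
      csqrt_sq (by nlinarith : (0:ℤ) ≤ (ℓ+1)^2-m^2),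
      csqrt_sq (by have := consec_nonneg (ℓ+m); nlinarith : (0:ℤ) ≤ (ℓ+m)*(ℓ+m-1)),
      csqrt_sq (by nlinarith : (0:ℤ) ≤ (ℓ-m+1)*(ℓ-m+2)),
      csqrt_sq (by have := consec_nonneg (ℓ-m); nlinarith : (0:ℤ) ≤ (ℓ-m)*(ℓ-m-1)),
      csqrt_sq (by nlinarith : (0:ℤ) ≤ (ℓ+m+1)*(ℓ+m+2))]
  push_cast
  apply mul_left_cancel₀ (mul_ne_zero d1 d2)
  rw [mul_zero]
  linear_combination
    ((2*((ℓ:ℂ)^2-(m:ℂ)^2) + ((ℓ:ℂ)+(m:ℂ))*((ℓ:ℂ)+(m:ℂ)-1) + ((ℓ:ℂ)-(m:ℂ))*((ℓ:ℂ)-(m:ℂ)-1))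
      * (4*((ℓ:ℂ)+1)^2-1)) * e1
    + ((2*(((ℓ:ℂ)+1)^2-(m:ℂ)^2) + ((ℓ:ℂ)-(m:ℂ)+1)*((ℓ:ℂ)-(m:ℂ)+2)
        + ((ℓ:ℂ)+(m:ℂ)+1)*((ℓ:ℂ)+(m:ℂ)+2)) * (4*(ℓ:ℂ)^2-1)) * e2

lemma hc_up {ℓ m : ℤ} (h2 : -ℓ ≤ m) (h3 : m ≤ ℓ) :
    -(2*(C (ℓ+1))*(C (ℓ+2))*(csqrt ((ℓ+1)^2-m^2)*csqrt ((ℓ+2)^2-m^2)))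
    + 2*(C (ℓ+1))*(C (ℓ+2))*(csqrt ((ℓ-m+1)*(ℓ-m+2))*csqrt ((ℓ+m+1)*(ℓ+m+2))) = 0 := by
  rw [csqrt_mul (by nlinarith : (0:ℤ) ≤ (ℓ+1)^2-m^2),
      csqrt_mul (by nlinarith : (0:ℤ) ≤ (ℓ-m+1)*(ℓ-m+2)),
      show ((ℓ+1)^2-m^2)*((ℓ+2)^2-m^2) = ((ℓ-m+1)*(ℓ-m+2))*((ℓ+m+1)*(ℓ+m+2)) by ring]
  ring

lemma hc_down {ℓ m : ℤ} (h1 : 3 ≤ ℓ) (h2 : -(ℓ-2) ≤ m) (h3 : m ≤ ℓ-2) :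
    -(2*(C ℓ)*(C (ℓ-1))*(csqrt (ℓ^2-m^2)*csqrt ((ℓ-1)^2-m^2)))
    + 2*(C ℓ)*(C (ℓ-1))*(csqrt ((ℓ+m)*(ℓ+m-1))*csqrt ((ℓ-m)*(ℓ-m-1))) = 0 := by
  rw [csqrt_mul (by nlinarith : (0:ℤ) ≤ ℓ^2-m^2),
      csqrt_mul (by nlinarith : (0:ℤ) ≤ (ℓ+m)*(ℓ+m-1)),
      show (ℓ^2-m^2)*((ℓ-1)^2-m^2) = ((ℓ+m)*(ℓ+m-1))*((ℓ-m)*(ℓ-m-1)) by ring]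
  ring

lemma key {ℓ m : ℤ} (h1 : 1 ≤ ℓ) (h2 : -ℓ ≤ m) (h3 : m ≤ ℓ) :
    (2:ℂ) • rhoH3 (rhoH3 (ξ ℓ m)) + rhoHp (rhoHm (ξ ℓ m)) + rhoHm (rhoHp (ξ ℓ m))
      - (2:ℂ) • rhoF3 (rhoF3 (ξ ℓ m)) - rhoFp (rhoFm (ξ ℓ m)) - rhoFm (rhoFp (ξ ℓ m)) = 0 := by
  have expand : (2:ℂ) • rhoH3 (rhoH3 (ξ ℓ m)) + rhoHp (rhoHm (ξ ℓ m)) + rhoHm (rhoHp (ξ ℓ m))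
      - (2:ℂ) • rhoF3 (rhoF3 (ξ ℓ m)) - rhoFp (rhoFm (ξ ℓ m)) - rhoFm (rhoFp (ξ ℓ m))
    = (-(2*(C ℓ)*(C (ℓ-1))*(csqrt (ℓ^2-m^2)*csqrt ((ℓ-1)^2-m^2)))
        + 2*(C ℓ)*(C (ℓ-1))*(csqrt ((ℓ+m)*(ℓ+m-1))*csqrt ((ℓ-m)*(ℓ-m-1)))) • ξ (ℓ-2) m
      + (2*(m:ℂ)^2
        + csqrt ((ℓ+m)*(ℓ-m+1))^2
        + csqrt ((ℓ-m)*(ℓ+m+1))^2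
        + 2*(C ℓ)^2 * csqrt (ℓ^2-m^2)^2
        + 2*(C (ℓ+1))^2 * csqrt ((ℓ+1)^2-m^2)^2
        + (C ℓ)^2 * csqrt ((ℓ+m)*(ℓ+m-1))^2
        + (C (ℓ+1))^2 * csqrt ((ℓ-m+1)*(ℓ-m+2))^2
        + (C ℓ)^2 * csqrt ((ℓ-m)*(ℓ-m-1))^2
        + (C (ℓ+1))^2 * csqrt ((ℓ+m+1)*(ℓ+m+2))^2) • ξ ℓ m
      + (-(2*(C (ℓ+1))*(C (ℓ+2))*(csqrt ((ℓ+1)^2-m^2)*csqrt ((ℓ+2)^2-m^2)))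
        + 2*(C (ℓ+1))*(C (ℓ+2))*(csqrt ((ℓ-m+1)*(ℓ-m+2))*csqrt ((ℓ+m+1)*(ℓ+m+2)))) • ξ (ℓ+2) m := by
    simp only [rhoH3_ξ, rhoHp_ξ, rhoHm_ξ, rhoF3_ξ, rhoFp_ξ, rhoFm_ξ, map_add, map_sub,
      map_neg, map_smul, smul_add, smul_sub, smul_neg, smul_smul]
    ring_nf
    module
  rw [expand, hc_zero h1 h2 h3, hc_up h2 h3, zero_smul, zero_smul, add_zero, add_zero]
  by_cases hS : inS (ℓ - 2, m)
  · rw [inS_iff] at hS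
    rw [hc_down (by omega) (by omega) (by omega), zero_smul]
  · rw [ξ_eq_zero hS, smul_zero]

lemma mkOp_not (f : ℤ → ℤ → V) {p : ℤ × ℤ} (h : ¬ inS p) (b : ℂ) :
    mkOp f (Finsupp.single p b) = 0 := by
  rw [mkOp_single, if_neg h, smul_zero]

/-- The Casimir element `J₁ = 2H₃² + H₊H₋ + H₋H₊ - 2F₃² - F₊F₋ - F₋F₊` acts as zero in
the representation `ρ₁₀` (corresponding to the scalar `ℓ₀² + ℓ₁² - 1` with
`ℓ₀ = 1, ℓ₁ = 0`). -/
theorem casimir_J1_acts_as_zero :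
    (2 : ℂ) • (rhoH3 ∘ₗ rhoH3) + rhoHp ∘ₗ rhoHm + rhoHm ∘ₗ rhoHp
      - (2 : ℂ) • (rhoF3 ∘ₗ rhoF3) - rhoFp ∘ₗ rhoFm - rhoFm ∘ₗ rhoFp = 0 := by
  apply Finsupp.lhom_ext
  intro p b
  rcases p with ⟨ℓ, m⟩
  simp only [LinearMap.add_apply, LinearMap.sub_apply, LinearMap.smul_apply,
    LinearMap.comp_apply, LinearMap.zero_apply]
  by_cases hp : inS (ℓ, m)
  · have hb : (Finsupp.single ((ℓ, m) : ℤ × ℤ) b : V) = b • ξ ℓ m := by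
      rw [ξ, if_pos hp, Finsupp.smul_single, smul_eq_mul, mul_one]
    rw [hb]
    simp only [map_smul]
    have hm' := abs_le.mp hp.2
    have hk := key hp.1 hm'.1 hm'.2
    calc (2:ℂ) • b • rhoH3 (rhoH3 (ξ ℓ m)) + b • rhoHp (rhoHm (ξ ℓ m)) + b • rhoHm (rhoHp (ξ ℓ m))
          - (2:ℂ) • b • rhoF3 (rhoF3 (ξ ℓ m)) - b • rhoFp (rhoFm (ξ ℓ m)) - b • rhoFm (rhoFp (ξ ℓ m))
        = b • ((2:ℂ) • rhoH3 (rhoH3 (ξ ℓ m)) + rhoHp (rhoHm (ξ ℓ m)) + rhoHm (rhoHp (ξ ℓ m))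
          - (2:ℂ) • rhoF3 (rhoF3 (ξ ℓ m)) - rhoFp (rhoFm (ξ ℓ m)) - rhoFm (rhoFp (ξ ℓ m))) := by
          module
      _ = 0 := by rw [hk, smul_zero]
  · have e3 : rhoH3 (Finsupp.single ((ℓ, m) : ℤ × ℤ) b : V) = 0 := mkOp_not _ hp b
    have ep : rhoHp (Finsupp.single ((ℓ, m) : ℤ × ℤ) b : V) = 0 := mkOp_not _ hp b
    have em : rhoHm (Finsupp.single ((ℓ, m) : ℤ × ℤ) b : V) = 0 := mkOp_not _ hp b
    have f3 : rhoF3 (Finsupp.single ((ℓ, m) : ℤ × ℤ) b : V) = 0 := mkOp_not _ hp b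
    have fp : rhoFp (Finsupp.single ((ℓ, m) : ℤ × ℤ) b : V) = 0 := mkOp_not _ hp b
    have fm : rhoFm (Finsupp.single ((ℓ, m) : ℤ × ℤ) b : V) = 0 := mkOp_not _ hp b
    rw [e3, ep, em, f3, fp, fm]
    simp

end
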